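/- There exists a constant c > 0 such that for all odd prime powers q and all sets A ⊆ F_q with q^{2/3} ≤ |A| ≤ q, one has max(|A+A|, |A·A|) ≥ c·(q·|A|)^{1/2}. -/

import Mathlib

open Pointwise

namespace SumProdAux

open Finset

set_option linter.unusedSectionVars false

variable {F : Type} [Field F] [Fintype F] [DecidableEq F]

lemma ringChar_pos : 0 < ringChar F :=
  Nat.pos_of_ne_zero (CharP.ringChar_ne_zero_of_finite F)

lemma orth (ψ : AddChar F ℂ) (hψ : ψ.IsPrimitive) (b : F) :
    ∑ t : F, ψ (t * b) = if b = 0 then (Fintype.card F : ℂ) else 0 := by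
  simpa using AddChar.sum_mulShift b hψ

lemma conj_char (ψ : AddChar F ℂ) (x : F) :
    (starRingEnd ℂ) (ψ x) = ψ (-x) := by
  rw [AddChar.starComp_apply (ringChar_pos (F := F)), AddChar.inv_apply]

lemma plancherel (ψ : AddChar F ℂ) (hψ : ψ.IsPrimitive) (B : Finset F) :
    ∑ t : F, ‖∑ b ∈ B, ψ (t * b)‖ ^ 2 = (Fintype.card F : ℝ) * B.card := by
  have key : ∑ t : F, (∑ b ∈ B, ψ (t * b)) * (starRingEnd ℂ) (∑ b ∈ B, ψ (t * b))
      = ((Fintype.card F : ℂ) * B.card) := by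
    have h1 : ∀ t : F, (∑ b ∈ B, ψ (t * b)) * (starRingEnd ℂ) (∑ b ∈ B, ψ (t * b))
        = ∑ b ∈ B, ∑ b' ∈ B, ψ (t * (b - b')) := by
      intro t
      rw [map_sum, Finset.sum_mul_sum]
      refine Finset.sum_congr rfl fun b _ => Finset.sum_congr rfl fun b' _ => ?_
      rw [conj_char, ← AddChar.map_add_eq_mul]
      congr 1; ring
    simp_rw [h1]
    rw [Finset.sum_comm]
    have h2 : ∀ b ∈ B, ∑ t : F, ∑ b' ∈ B, ψ (t * (b - b')) = (Fintype.card F : ℂ) := by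
      intro b hb
      rw [Finset.sum_comm]
      have h3 : ∀ b' ∈ B, ∑ t : F, ψ (t * (b - b'))
          = if b = b' then (Fintype.card F : ℂ) else 0 := by
        intro b' _
        rw [orth ψ hψ]
        simp [sub_eq_zero]
      rw [Finset.sum_congr rfl h3, Finset.sum_ite_eq B b (fun _ => (Fintype.card F : ℂ)),
        if_pos hb]
    rw [Finset.sum_congr rfl h2, Finset.sum_const, nsmul_eq_mul]
    ring
  have cast1 : ((∑ t : F, ‖∑ b ∈ B, ψ (t * b)‖ ^ 2 : ℝ) : ℂ)
      = ∑ t : F, (∑ b ∈ B, ψ (t * b)) * (starRingEnd ℂ) (∑ b ∈ B, ψ (t * b)) := by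
    push_cast
    refine Finset.sum_congr rfl fun t _ => ?_
    rw [Complex.mul_conj, Complex.normSq_eq_norm_sq]
    push_cast
    ring
  rw [key] at cast1
  exact_mod_cast cast1

lemma fbound (ψ : AddChar F ℂ) (hψ : ψ.IsPrimitive) (A P : Finset F)
    {t : F} (ht : t ≠ 0) :
    ‖∑ a ∈ A.erase 0, ∑ p ∈ P, ψ (t * (p * a⁻¹))‖ ≤
      Real.sqrt (A.card) * Real.sqrt ((Fintype.card F : ℝ) * P.card) := by
  set A' := A.erase 0 with hA'
  have step1 : ‖∑ a ∈ A', ∑ p ∈ P, ψ (t * (p * a⁻¹))‖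
      ≤ ∑ a ∈ A', ‖∑ p ∈ P, ψ ((t * a⁻¹) * p)‖ := by
    refine (norm_sum_le _ _).trans_eq ?_
    refine Finset.sum_congr rfl fun a _ => ?_
    congr 1
    refine Finset.sum_congr rfl fun p _ => ?_
    congr 1; ring
  have step2 : ∑ a ∈ A', ‖∑ p ∈ P, ψ ((t * a⁻¹) * p)‖
      ≤ Real.sqrt (A'.card) * Real.sqrt (∑ a ∈ A', ‖∑ p ∈ P, ψ ((t * a⁻¹) * p)‖ ^ 2) := by
    have := Real.sum_mul_le_sqrt_mul_sqrt A' (fun _ => (1 : ℝ))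
      (fun a => ‖∑ p ∈ P, ψ ((t * a⁻¹) * p)‖)
    simpa using this
  have step3 : ∑ a ∈ A', ‖∑ p ∈ P, ψ ((t * a⁻¹) * p)‖ ^ 2
      ≤ (Fintype.card F : ℝ) * P.card := by
    rw [← plancherel ψ hψ P]
    have hinj : Set.InjOn (fun a : F => t * a⁻¹) A' := by
      intro a ha b hb hab
      have ha0 : a ≠ 0 := Finset.ne_of_mem_erase ha
      have hb0 : b ≠ 0 := Finset.ne_of_mem_erase hb
      exact inv_injective (mul_left_cancel₀ ht hab)
    calc ∑ a ∈ A', ‖∑ p ∈ P, ψ ((t * a⁻¹) * p)‖ ^ 2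
        = ∑ u ∈ A'.image (fun a => t * a⁻¹), ‖∑ p ∈ P, ψ (u * p)‖ ^ 2 := by
          rw [Finset.sum_image (fun a ha b hb h => hinj ha hb h)]
      _ ≤ ∑ u : F, ‖∑ p ∈ P, ψ (u * p)‖ ^ 2 := by
          refine Finset.sum_le_sum_of_subset_of_nonneg (Finset.subset_univ _) ?_
          intro u _ _; positivity
  calc ‖∑ a ∈ A', ∑ p ∈ P, ψ (t * (p * a⁻¹))‖
      ≤ Real.sqrt (A'.card) * Real.sqrt (∑ a ∈ A', ‖∑ p ∈ P, ψ ((t * a⁻¹) * p)‖ ^ 2) :=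
        step1.trans step2
    _ ≤ Real.sqrt (A.card) * Real.sqrt ((Fintype.card F : ℝ) * P.card) := by
        refine mul_le_mul (Real.sqrt_le_sqrt ?_) (Real.sqrt_le_sqrt step3)
          (Real.sqrt_nonneg _) (Real.sqrt_nonneg _)
        exact_mod_cast Finset.card_erase_le

lemma inner_count (A : Finset F) {a : F} (ha : a ∈ A.erase 0) {a' : F} (ha' : a' ∈ A) :
    A.card ≤ (((A * A) ×ˢ (A + A)).filter (fun x => a' + x.1 * a⁻¹ = x.2)).card := by
  have ha0 : a ≠ 0 := Finset.ne_of_mem_erase ha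
  have haA : a ∈ A := Finset.mem_of_mem_erase ha
  refine Finset.card_le_card_of_injOn (fun b => (a * b, a' + b)) ?_ ?_
  · intro b hb
    simp only [Finset.mem_coe, Finset.mem_filter, Finset.mem_product]
    refine ⟨⟨Finset.mul_mem_mul haA hb, Finset.add_mem_add ha' hb⟩, ?_⟩
    field_simp
  · intro b _ b' _ h
    simpa using congrArg Prod.snd h

lemma fourier (ψ : AddChar F ℂ) (hψ : ψ.IsPrimitive) (A : Finset F) :
    ∑ t : F, (∑ a' ∈ A, ψ (t * a')) * (∑ s ∈ A + A, ψ (-(t * s))) *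
        (∑ a ∈ A.erase 0, ∑ p ∈ A * A, ψ (t * (p * a⁻¹)))
      = (Fintype.card F : ℂ) * ∑ a ∈ A.erase 0, ∑ a' ∈ A,
          ((((A * A) ×ˢ (A + A)).filter (fun x => a' + x.1 * a⁻¹ = x.2)).card : ℂ) := by
  have expand : ∀ t : F,
      (∑ a' ∈ A, ψ (t * a')) * (∑ s ∈ A + A, ψ (-(t * s))) *
        (∑ a ∈ A.erase 0, ∑ p ∈ A * A, ψ (t * (p * a⁻¹)))
      = ∑ a ∈ A.erase 0, ∑ p ∈ A * A, ∑ a' ∈ A, ∑ s ∈ A + A,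
          ψ (t * (a' + p * a⁻¹ - s)) := by
    intro t
    rw [mul_comm, Finset.sum_mul]
    refine Finset.sum_congr rfl fun a _ => ?_
    rw [Finset.sum_mul]
    refine Finset.sum_congr rfl fun p _ => ?_
    rw [Finset.sum_mul_sum, Finset.mul_sum]
    refine Finset.sum_congr rfl fun a' _ => ?_
    rw [Finset.mul_sum]
    refine Finset.sum_congr rfl fun s _ => ?_
    rw [← AddChar.map_add_eq_mul, ← AddChar.map_add_eq_mul]
    congr 1; ring
  rw [Finset.sum_congr rfl fun t _ => expand t, Finset.sum_comm, Finset.mul_sum]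
  refine Finset.sum_congr rfl fun a ha => ?_
  calc ∑ t : F, ∑ p ∈ A * A, ∑ a' ∈ A, ∑ s ∈ A + A, ψ (t * (a' + p * a⁻¹ - s))
      = ∑ p ∈ A * A, ∑ a' ∈ A, ∑ s ∈ A + A, ∑ t : F, ψ (t * (a' + p * a⁻¹ - s)) := by
        rw [Finset.sum_comm]
        exact Finset.sum_congr rfl fun p _ => by
          rw [Finset.sum_comm]
          exact Finset.sum_congr rfl fun a' _ => Finset.sum_comm
    _ = ∑ a' ∈ A, ∑ p ∈ A * A, ∑ s ∈ A + A,
          (if a' + p * a⁻¹ - s = 0 then (Fintype.card F : ℂ) else 0) := by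
        rw [Finset.sum_comm]
        exact Finset.sum_congr rfl fun a' _ => Finset.sum_congr rfl fun p _ =>
          Finset.sum_congr rfl fun s _ => orth ψ hψ _
    _ = ∑ a' ∈ A, ∑ x ∈ (A * A) ×ˢ (A + A),
          (Fintype.card F : ℂ) * (if a' + x.1 * a⁻¹ = x.2 then 1 else 0) := by
        refine Finset.sum_congr rfl fun a' _ => ?_
        rw [← Finset.sum_product']
        refine Finset.sum_congr rfl fun x _ => ?_
        by_cases h : a' + x.1 * a⁻¹ = x.2
        · rw [if_pos (by rw [h, sub_self]), if_pos h, mul_one]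
        · rw [if_neg (fun hc => h (by linear_combination hc)), if_neg h, mul_zero]
    _ = (Fintype.card F : ℂ) * ∑ a' ∈ A,
          ((((A * A) ×ˢ (A + A)).filter (fun x => a' + x.1 * a⁻¹ = x.2)).card : ℂ) := by
        rw [Finset.mul_sum]
        refine Finset.sum_congr rfl fun a' _ => ?_
        rw [← Finset.mul_sum, Finset.sum_boole]

set_option maxHeartbeats 1000000 in
lemma final_arith {q a S P : ℝ} (hq : 3 ≤ q) (ha : 2 ≤ a) (hS : 1 ≤ S) (hP : 1 ≤ P)
    (hqa : q ≤ a * Real.sqrt a)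
    (hmain : q * ((a - 1) * a ^ 2) ≤ a ^ 2 * (S * P) +
      (Real.sqrt (q * a) * Real.sqrt (q * S)) * (Real.sqrt a * Real.sqrt (q * P))) :
    (1 / 4) * Real.sqrt (q * a) ≤ max S P := by
  by_contra hcon
  push_neg at hcon
  have hq0 : (0:ℝ) ≤ q := by linarith
  have ha0 : (0:ℝ) ≤ a := by linarith
  set s := Real.sqrt q with hs
  set r := Real.sqrt a with hr
  have hs2 : s ^ 2 = q := Real.sq_sqrt hq0
  have hr2 : r ^ 2 = a := Real.sq_sqrt ha0
  have hs0 : 0 ≤ s := Real.sqrt_nonneg _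
  have hr0 : 0 ≤ r := Real.sqrt_nonneg _
  set u := Real.sqrt S with hu
  set v := Real.sqrt P with hv
  have hu2 : u ^ 2 = S := Real.sq_sqrt (by linarith)
  have hv2 : v ^ 2 = P := Real.sq_sqrt (by linarith)
  have hu0 : 0 ≤ u := Real.sqrt_nonneg _
  have hv0 : 0 ≤ v := Real.sqrt_nonneg _
  have hqa' : Real.sqrt (q * a) = s * r := Real.sqrt_mul hq0 a
  have hqS : Real.sqrt (q * S) = s * u := Real.sqrt_mul hq0 S
  have hqP : Real.sqrt (q * P) = s * v := Real.sqrt_mul hq0 P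
  have hSm : S < 1 / 4 * (s * r) := by
    rw [hqa'] at hcon; exact lt_of_le_of_lt (le_max_left _ _) hcon
  have hPm : P < 1 / 4 * (s * r) := by
    rw [hqa'] at hcon; exact lt_of_le_of_lt (le_max_right _ _) hcon
  rw [hqa', hqS, hqP] at hmain
  have huv : u * v < 1 / 4 * (s * r) := by
    have h1 : (u * v) ^ 2 < (1 / 4 * (s * r)) ^ 2 := by
      calc (u*v)^2 = S * P := by rw [mul_pow, hu2, hv2]
        _ < (1/4*(s*r)) * (1/4*(s*r)) := by
            nlinarith [mul_pos (lt_of_lt_of_le one_pos hS) (lt_of_lt_of_le one_pos hP)]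
        _ = (1/4*(s*r))^2 := by ring
    have h2 : 0 ≤ 1/4*(s*r) := by positivity
    nlinarith [mul_nonneg hu0 hv0]
  have hq_le : s ^ 2 ≤ r ^ 3 := by
    rw [hs2]
    calc q ≤ a * r := hqa
      _ = r ^ 3 := by rw [← hr2]; ring
  have hs0' : 0 < s := Real.sqrt_pos.mpr (by linarith)
  have hr0' : 0 < r := Real.sqrt_pos.mpr (by linarith)
  have hr2ge : 2 ≤ r ^ 2 := by rw [hr2]; exact ha
  have hL : s ^ 2 * r ^ 6 / 2 ≤ q * ((a - 1) * a ^ 2) := by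
    rw [← hs2, ← hr2]
    nlinarith [mul_nonneg (mul_nonneg (sq_nonneg s) (pow_nonneg hr0 4))
      (by linarith : (0:ℝ) ≤ r ^ 2 - 2)]
  have hsr4 : 4 < s * r := by nlinarith [hSm]
  have hSP : S * P < s ^ 2 * r ^ 2 / 16 := by
    nlinarith [mul_lt_mul'' hSm hPm (by linarith : (0:ℝ) ≤ S) (by linarith : (0:ℝ) ≤ P)]
  have hR1 : a ^ 2 * (S * P) < s ^ 2 * r ^ 6 / 16 := by
    have ha2 : a ^ 2 = r ^ 4 := by rw [← hr2]; ring
    rw [ha2]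
    nlinarith [mul_lt_mul_of_pos_left hSP (by positivity : (0:ℝ) < r ^ 4)]
  have hR2 : (s * r * (s * u)) * (r * (s * v)) ≤ s ^ 2 * r ^ 6 / 4 := by
    have he : (s * r * (s * u)) * (r * (s * v)) = s ^ 3 * r ^ 2 * (u * v) := by ring
    rw [he]
    calc s ^ 3 * r ^ 2 * (u * v) ≤ s ^ 3 * r ^ 2 * (1 / 4 * (s * r)) := by
          apply mul_le_mul_of_nonneg_left (le_of_lt huv) (by positivity)
      _ = s ^ 4 * r ^ 3 / 4 := by ring
      _ ≤ s ^ 2 * r ^ 3 * r ^ 3 / 4 := by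
          nlinarith [mul_le_mul_of_nonneg_left hq_le (by positivity : (0:ℝ) ≤ s ^ 2 * r ^ 3 / 4)]
      _ = s ^ 2 * r ^ 6 / 4 := by ring
  have hpos : 0 < s ^ 2 * r ^ 6 := by positivity
  linarith [hmain, hL, hR1, hR2]

end SumProdAux

set_option maxHeartbeats 1000000 in
open SumProdAux in
/-- There is `c > 0` such that for every odd prime power `q` and `A ⊆ F_q` with
`q^{2/3} ≤ |A| ≤ q`, `max(|A+A|, |A·A|) ≥ c (q|A|)^{1/2}`. -/
theorem sum_product_large_range :
    ∃ c : ℝ, 0 < c ∧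
      ∀ (F : Type) (_ : Field F) (_ : Fintype F) (_ : DecidableEq F) (A : Finset F),
        Odd (Fintype.card F) →
        ((Fintype.card F : ℝ) ^ ((2 : ℝ) / 3) ≤ (A.card : ℝ)) →
        ((A.card : ℝ) ≤ (Fintype.card F : ℝ)) →
        c * Real.sqrt ((Fintype.card F : ℝ) * A.card)
          ≤ max ((A + A).card : ℝ) ((A * A).card : ℝ) := by
  classical
  refine ⟨1/4, by norm_num, ?_⟩
  intro F hF hFt hDE A hodd hlow hupp
  letI := hF; letI := hFt; letI := hDE
  set qn := Fintype.card F with hqn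
  have hq2 : 1 < qn := Fintype.one_lt_card
  have hq3n : 3 ≤ qn := by
    rcases hodd with ⟨k, hk⟩; omega
  have hq3 : (3:ℝ) ≤ (qn:ℝ) := by exact_mod_cast hq3n
  have hq0 : (0:ℝ) ≤ (qn:ℝ) := by linarith
  -- |A| ≥ 2
  have h9 : ((3:ℝ) ^ ((2:ℝ)/3)) ^ (3:ℝ) = 9 := by
    rw [← Real.rpow_mul (by norm_num : (0:ℝ) ≤ 3)]
    norm_num
  have h32 : (2:ℝ) < (3:ℝ) ^ ((2:ℝ)/3) := by
    by_contra hc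
    push_neg at hc
    have h0 : (0:ℝ) ≤ (3:ℝ) ^ ((2:ℝ)/3) := le_of_lt (Real.rpow_pos_of_pos (by norm_num) _)
    have h1 := Real.rpow_le_rpow h0 hc (by norm_num : (0:ℝ) ≤ 3)
    rw [h9] at h1
    have h8 : (2:ℝ) ^ (3:ℝ) = 8 := by
      rw [show (3:ℝ) = ((3:ℕ):ℝ) by norm_num, Real.rpow_natCast]
      norm_num
    rw [h8] at h1
    linarith
  have ha2 : (2:ℝ) ≤ (A.card:ℝ) := by
    refine le_trans (le_of_lt h32) (le_trans ?_ hlow)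
    exact Real.rpow_le_rpow (by norm_num) hq3 (by norm_num)
  have hAcard1 : 1 ≤ A.card := by
    by_contra hc
    push_neg at hc
    have h0 : A.card = 0 := by omega
    rw [h0] at ha2
    norm_num at ha2
  have hAne : A.Nonempty := Finset.card_pos.mp hAcard1
  have hSne : (A + A).Nonempty := hAne.add hAne
  have hPne : (A * A).Nonempty := hAne.mul hAne
  have hS1 : (1:ℝ) ≤ ((A + A).card : ℝ) := by exact_mod_cast hSne.card_pos
  have hP1 : (1:ℝ) ≤ ((A * A).card : ℝ) := by exact_mod_cast hPne.card_pos
  have hS0 : (0:ℝ) ≤ ((A + A).card : ℝ) := by linarith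
  have hP0 : (0:ℝ) ≤ ((A * A).card : ℝ) := by linarith
  have ha0 : (0:ℝ) ≤ (A.card:ℝ) := by linarith
  -- q ≤ a √a
  have hqa : (qn:ℝ) ≤ (A.card:ℝ) * Real.sqrt (A.card) := by
    have h1 : ((qn:ℝ) ^ ((2:ℝ)/3)) ^ ((3:ℝ)/2) ≤ ((A.card:ℝ)) ^ ((3:ℝ)/2) :=
      Real.rpow_le_rpow (Real.rpow_nonneg hq0 _) hlow (by norm_num)
    have h2 : ((qn:ℝ) ^ ((2:ℝ)/3)) ^ ((3:ℝ)/2) = (qn:ℝ) := by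
      rw [← Real.rpow_mul hq0]
      norm_num
    have h3 : ((A.card:ℝ)) ^ ((3:ℝ)/2) = (A.card:ℝ) * Real.sqrt (A.card) := by
      have hA0 : (0:ℝ) < (A.card:ℝ) := by linarith
      rw [show (3:ℝ)/2 = 1 + 1/2 by norm_num, Real.rpow_add hA0, Real.rpow_one,
        Real.sqrt_eq_rpow]
    rw [h2, h3] at h1
    exact h1
  -- the character
  obtain ⟨ψ, hψ⟩ : ∃ ψ : AddChar F ℂ, ψ.IsPrimitive :=
    ⟨_, AddChar.FiniteField.primitiveChar_to_Complex_isPrimitive F⟩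
  -- the counting quantity
  set N : ℕ := ∑ a ∈ A.erase 0, ∑ a' ∈ A,
      (((A * A) ×ˢ (A + A)).filter (fun x => a' + x.1 * a⁻¹ = x.2)).card with hN
  have hNlbn : (A.card - 1) * (A.card * A.card) ≤ N := by
    rw [hN]
    calc (A.card - 1) * (A.card * A.card) ≤ (A.erase 0).card * (A.card * A.card) :=
          Nat.mul_le_mul_right _ Finset.pred_card_le_card_erase
      _ = ∑ a ∈ A.erase 0, ∑ a' ∈ A, A.card := by
          simp only [Finset.sum_const, smul_eq_mul, mul_one]
      _ ≤ _ := Finset.sum_le_sum fun a ha => Finset.sum_le_sum fun a' ha' =>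
          inner_count A ha ha'
  have hNlb : ((A.card:ℝ) - 1) * ((A.card:ℝ) * (A.card:ℝ)) ≤ (N:ℝ) := by
    have := hNlbn
    have h := (Nat.cast_le (α := ℝ)).2 this
    push_cast [Nat.cast_sub hAcard1] at h
    exact_mod_cast h
  -- Fourier
  set f : F → ℂ := fun t => (∑ a' ∈ A, ψ (t * a')) * (∑ s ∈ A + A, ψ (-(t * s))) *
      (∑ a ∈ A.erase 0, ∑ p ∈ A * A, ψ (t * (p * a⁻¹))) with hf
  have hfour : ∑ t : F, f t = (qn:ℂ) * (N:ℂ) := by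
    rw [hf]
    rw [show (∑ t : F, (∑ a' ∈ A, ψ (t * a')) * (∑ s ∈ A + A, ψ (-(t * s))) *
      (∑ a ∈ A.erase 0, ∑ p ∈ A * A, ψ (t * (p * a⁻¹)))) = _ from fourier ψ hψ A]
    congr 1
    rw [hN]
    push_cast
    rfl
  have hsplit : f 0 + ∑ t ∈ Finset.univ.erase 0, f t = ∑ t : F, f t :=
    Finset.add_sum_erase _ f (Finset.mem_univ 0)
  have hf0 : f 0 = ((A.card : ℂ)) * (((A + A).card : ℂ)) *
      ((((A.erase 0).card : ℂ)) * (((A * A).card : ℂ))) := by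
    rw [hf]
    simp only [zero_mul, AddChar.map_zero_eq_one, neg_zero, Finset.sum_const, nsmul_eq_mul,
      mul_one]
  set E : ℂ := ∑ t ∈ Finset.univ.erase 0, f t with hE
  have hEeq : E = (((qn:ℝ) * (N:ℝ) : ℝ) : ℂ) -
      (((A.card:ℝ) * ((A + A).card:ℝ) * (((A.erase 0).card:ℝ) * ((A * A).card:ℝ)) : ℝ) : ℂ) := by
    rw [hE]
    have : f 0 + ∑ t ∈ Finset.univ.erase 0, f t = (qn:ℂ) * (N:ℂ) := by rw [hsplit, hfour]
    rw [eq_sub_iff_add_eq]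
    push_cast
    rw [← this, hf0]
    push_cast
    ring
  have hreal : (qn:ℝ) * (N:ℝ) ≤ (A.card:ℝ) * ((A + A).card:ℝ) *
      (((A.erase 0).card:ℝ) * ((A * A).card:ℝ)) + ‖E‖ := by
    have h1 : E.re = (qn:ℝ) * (N:ℝ) -
        (A.card:ℝ) * ((A + A).card:ℝ) * (((A.erase 0).card:ℝ) * ((A * A).card:ℝ)) := by
      rw [hEeq]
      simp
    have h2 : E.re ≤ ‖E‖ := by
      exact Complex.re_le_norm E
    linarith
  -- bound on ‖E‖
  have hVpl : ∑ t : F, ‖∑ s ∈ A + A, ψ (-(t * s))‖ ^ 2 = (qn:ℝ) * ((A + A).card : ℝ) := by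
    rw [← plancherel ψ hψ (A + A)]
    exact Fintype.sum_bijective (fun t : F => -t) neg_involutive.bijective _ _ (fun t => by
      simp only [neg_mul])
  have hEb : ‖E‖ ≤ (Real.sqrt ((qn:ℝ) * A.card) * Real.sqrt ((qn:ℝ) * ((A + A).card))) *
      (Real.sqrt (A.card) * Real.sqrt ((qn:ℝ) * ((A * A).card))) := by
    set M := Real.sqrt (A.card) * Real.sqrt ((qn:ℝ) * ((A * A).card)) with hM
    have hM0 : 0 ≤ M := by
      rw [hM]; exact mul_nonneg (Real.sqrt_nonneg _) (Real.sqrt_nonneg _)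
    calc ‖E‖ ≤ ∑ t ∈ Finset.univ.erase 0, ‖f t‖ := norm_sum_le _ _
      _ ≤ ∑ t ∈ Finset.univ.erase 0,
            (‖∑ a' ∈ A, ψ (t * a')‖ * ‖∑ s ∈ A + A, ψ (-(t * s))‖) * M := by
          refine Finset.sum_le_sum fun t ht => ?_
          have ht0 : t ≠ 0 := Finset.ne_of_mem_erase ht
          rw [hf]
          rw [norm_mul, norm_mul]
          exact mul_le_mul_of_nonneg_left (fbound ψ hψ A (A * A) ht0)
            (mul_nonneg (norm_nonneg _) (norm_nonneg _))
      _ = (∑ t ∈ Finset.univ.erase 0,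
            ‖∑ a' ∈ A, ψ (t * a')‖ * ‖∑ s ∈ A + A, ψ (-(t * s))‖) * M := by
          rw [Finset.sum_mul]
      _ ≤ (Real.sqrt (∑ t ∈ Finset.univ.erase 0, ‖∑ a' ∈ A, ψ (t * a')‖ ^ 2) *
            Real.sqrt (∑ t ∈ Finset.univ.erase 0, ‖∑ s ∈ A + A, ψ (-(t * s))‖ ^ 2)) * M :=
          mul_le_mul_of_nonneg_right (Real.sum_mul_le_sqrt_mul_sqrt _ _ _) hM0
      _ ≤ (Real.sqrt ((qn:ℝ) * A.card) * Real.sqrt ((qn:ℝ) * ((A + A).card))) * M := by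
          refine mul_le_mul_of_nonneg_right
            (mul_le_mul (Real.sqrt_le_sqrt ?_) (Real.sqrt_le_sqrt ?_)
              (Real.sqrt_nonneg _) (Real.sqrt_nonneg _)) hM0
          · refine le_trans (Finset.sum_le_sum_of_subset_of_nonneg (Finset.subset_univ _)
              (fun t _ _ => sq_nonneg _)) ?_
            exact le_of_eq (plancherel ψ hψ A)
          · refine le_trans (Finset.sum_le_sum_of_subset_of_nonneg (Finset.subset_univ _)
              (fun t _ _ => sq_nonneg _)) ?_
            exact le_of_eq hVpl
  -- assemble
  have hA'le : (((A.erase 0).card):ℝ) ≤ (A.card:ℝ) := by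
    exact_mod_cast Finset.card_erase_le
  have hA'0 : (0:ℝ) ≤ (((A.erase 0).card):ℝ) := Nat.cast_nonneg _
  have hmain : (qn:ℝ) * (((A.card:ℝ) - 1) * (A.card:ℝ) ^ 2) ≤
      (A.card:ℝ) ^ 2 * (((A + A).card:ℝ) * ((A * A).card:ℝ)) +
      (Real.sqrt ((qn:ℝ) * (A.card:ℝ)) * Real.sqrt ((qn:ℝ) * ((A + A).card:ℝ))) *
        (Real.sqrt (A.card:ℝ) * Real.sqrt ((qn:ℝ) * ((A * A).card:ℝ))) := by
    have h1 : (qn:ℝ) * (((A.card:ℝ) - 1) * (A.card:ℝ) ^ 2) ≤ (qn:ℝ) * (N:ℝ) := by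
      have := mul_le_mul_of_nonneg_left hNlb hq0
      nlinarith [this]
    have h2 : (A.card:ℝ) * ((A + A).card:ℝ) * (((A.erase 0).card:ℝ) * ((A * A).card:ℝ))
        ≤ (A.card:ℝ) ^ 2 * (((A + A).card:ℝ) * ((A * A).card:ℝ)) := by
      nlinarith [mul_nonneg (mul_nonneg ha0 hS0) (mul_nonneg hP0
        (sub_nonneg.mpr hA'le))]
    linarith [hreal, hEb]
  exact final_arith hq3 ha2 hS1 hP1 hqa hmain
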